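/- Let R be a commutative ring, M a finitely generated projective R-module, and w ∈ Sym^d(M) for d ≥ 1. Let γ = (1/d)·dw ∈ M ⊗ Sym^{d-1}(M) be (1/d times) the image of w under the de Rham-type differential Sym^d(M) → M ⊗ Sym^{d-1}(M) (in coordinates, w ↦ Σ_i dx_i ⊗ ∂w/∂x_i). On the complex F = Λ^•(M) ⊗_R Sym(M), define δ = d_Koszul + (γ ∧ −), where d_Koszul is contraction with the tautological element of M* ⊗ M composed with multiplication in Sym(M), and γ ∧ − is exterior multiplication by the M-component of γ combined with Sym-multiplication by the Sym^{d-1}(M)-component. Then δ∘δ equals multiplication by w (viewing w as an element of Sym(M) acting on the Sym factor). -/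

import Mathlib

open MvPolynomial

/-- The underlying module of the Koszul factorization `F = Λ•(M) ⊗ Sym(M)` for `M`
free with basis `x₁,...,xₙ`: a basis element `dx_S ⊗ f` is encoded as the finitely
supported function sending the finset `S` to the polynomial `f`. -/
abbrev KoszulMod (k : Type*) [CommRing k] (n : ℕ) :=
  Finset (Fin n) →₀ MvPolynomial (Fin n) k

/-- The sign `(−1)^{#{j ∈ S : j < i}}` occurring when removing/inserting `dxᵢ`
from/into `dx_S`. -/
def koszulSign {n : ℕ} (S : Finset (Fin n)) (i : Fin n) : ℤ :=
  (-1) ^ (S.filter (fun j => j < i)).card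

/-- The Koszul differential `d_Koszul`: contraction with the tautological (Euler)
element of `M* ⊗ M` composed with multiplication in `Sym(M)`; in coordinates
`dx_{i₁}∧⋯∧dx_{i_m} ⊗ f ↦ ∑_j (−1)^{j+1} dx_{i₁}∧⋯∧dx̂_{i_j}∧⋯ ⊗ x_{i_j}·f`. -/
noncomputable def dKoszul {k : Type*} [CommRing k] {n : ℕ}
    (b : KoszulMod k n) : KoszulMod k n :=
  b.sum fun S f => ∑ i ∈ S, koszulSign S i • Finsupp.single (S.erase i) (X i * f)

/-- Exterior multiplication by `γ = (1/d)·dw ∈ M ⊗ Sym^{d−1}(M)`: in coordinates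
`β ⊗ f ↦ ∑ᵢ dxᵢ ∧ β ⊗ (1/d)(∂w/∂xᵢ)·f`. -/
noncomputable def gammaWedge {k : Type*} [Field k] {n : ℕ} (d : ℕ)
    (w : MvPolynomial (Fin n) k) (b : KoszulMod k n) : KoszulMod k n :=
  b.sum fun S f => ∑ i : Fin n,
    if i ∈ S then 0
    else koszulSign S i •
      Finsupp.single (insert i S) (C ((d : k)⁻¹) * pderiv i w * f)

namespace KoszulProof

section Signs

variable {n : ℕ}

lemma sign_mul_self (S : Finset (Fin n)) (i : Fin n) :
    koszulSign S i * koszulSign S i = 1 := by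
  unfold koszulSign
  rw [← pow_add]
  exact Even.neg_one_pow ⟨_, rfl⟩

lemma sign_erase_self (S : Finset (Fin n)) (i : Fin n) :
    koszulSign (S.erase i) i = koszulSign S i := by
  unfold koszulSign
  rw [Finset.filter_erase, Finset.erase_eq_of_notMem (by simp)]

lemma sign_insert_self (S : Finset (Fin n)) (i : Fin n) :
    koszulSign (insert i S) i = koszulSign S i := by
  unfold koszulSign
  rw [Finset.filter_insert, if_neg (lt_irrefl i)]

lemma sign_erase_of_mem {S : Finset (Fin n)} {j : Fin n} (hj : j ∈ S) (i : Fin n) :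
    koszulSign (S.erase j) i = (if j < i then -1 else 1) * koszulSign S i := by
  unfold koszulSign
  rw [Finset.filter_erase]
  split_ifs with h
  · have hjf : j ∈ S.filter (fun l => l < i) := Finset.mem_filter.2 ⟨hj, h⟩
    rw [Finset.card_erase_of_mem hjf]
    have hc : 1 ≤ (S.filter (fun l => l < i)).card := Finset.card_pos.2 ⟨j, hjf⟩
    have hp : ((-1 : ℤ)) ^ (S.filter (fun l => l < i)).card
        = (-1 : ℤ) ^ ((S.filter (fun l => l < i)).card - 1) * (-1) := by
      rw [← pow_succ, Nat.sub_add_cancel hc]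
    linarith [hp]
  · rw [Finset.erase_eq_of_notMem (by simp [Finset.mem_filter, h]), one_mul]

lemma sign_insert_of_not_mem {S : Finset (Fin n)} {j : Fin n} (hj : j ∉ S) (i : Fin n) :
    koszulSign (insert j S) i = (if j < i then -1 else 1) * koszulSign S i := by
  unfold koszulSign
  rw [Finset.filter_insert]
  split_ifs with h
  · rw [Finset.card_insert_of_notMem (by simp [Finset.mem_filter, hj]), pow_succ]
    ring
  · rw [one_mul]

lemma eps_cancel {i j : Fin n} (hij : i ≠ j) :
    (if j < i then (-1 : ℤ) else 1) + (if i < j then -1 else 1) = 0 := by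
  rcases lt_or_gt_of_ne hij with h | h
  · rw [if_neg (asymm h), if_pos h]; ring
  · rw [if_pos h, if_neg (asymm h)]; ring

end Signs

variable {k : Type*} [Field k] {n : ℕ}

/-- Euler's identity on a single monomial. -/
lemma euler_monomial (u : Fin n →₀ ℕ) (a : k) :
    ∑ i : Fin n, X i * pderiv i (monomial u a)
      = C ((∑ i : Fin n, u i : ℕ) : k) * monomial u a := by
  have h : ∀ i : Fin n, X i * pderiv i (monomial u a) = monomial u (a * (u i : k)) := by
    intro i
    rw [pderiv_monomial]
    by_cases hi : u i = 0
    · simp [hi]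
    · rw [X, monomial_mul, one_mul]
      congr 1
      rw [add_comm,
        tsub_add_cancel_of_le (Finsupp.single_le_iff.mpr (Nat.one_le_iff_ne_zero.mpr hi))]
  simp_rw [h]
  rw [← map_sum (monomial u : k →ₗ[k] MvPolynomial (Fin n) k), ← Finset.mul_sum,
    C_mul_monomial]
  congr 1
  push_cast
  ring

/-- Euler's homogeneous function theorem. -/
lemma euler {d : ℕ} {w : MvPolynomial (Fin n) k} (hw : w.IsHomogeneous d) :
    ∑ i : Fin n, X i * pderiv i w = C (d : k) * w := by
  conv_lhs => rw [w.as_sum]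
  simp_rw [map_sum, Finset.mul_sum]
  rw [Finset.sum_comm]
  conv_rhs => rw [w.as_sum, Finset.mul_sum]
  apply Finset.sum_congr rfl
  intro u hu
  rw [euler_monomial]
  have h1 : Finsupp.degree u = d := by
    rw [Finsupp.degree_eq_weight_one]
    exact hw (mem_support_iff.mp hu)
  have h2 : (∑ i : Fin n, u i) = d := by
    rw [← h1]
    unfold Finsupp.degree
    exact (Finset.sum_subset (Finset.subset_univ _)
      (fun i _ hi => Finsupp.notMem_support_iff.mp hi)).symm
  rw [h2]

/-- The summand of the Koszul differential corresponding to the variable `i`,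
as a linear map. -/
noncomputable def dOp (i : Fin n) :
    KoszulMod k n →ₗ[MvPolynomial (Fin n) k] KoszulMod k n :=
  Finsupp.lsum ℕ fun S =>
    if i ∈ S then koszulSign S i •
      ((Finsupp.lsingle (S.erase i)).comp (LinearMap.mulLeft (MvPolynomial (Fin n) k) (X i)))
    else 0

/-- The summand of `γ ∧ −` corresponding to the variable `i`, as a linear map. -/
noncomputable def eOp (d : ℕ) (w : MvPolynomial (Fin n) k) (i : Fin n) :
    KoszulMod k n →ₗ[MvPolynomial (Fin n) k] KoszulMod k n :=
  Finsupp.lsum ℕ fun S =>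
    if i ∈ S then 0
    else koszulSign S i •
      ((Finsupp.lsingle (insert i S)).comp
        (LinearMap.mulLeft (MvPolynomial (Fin n) k) (C ((d : k)⁻¹) * pderiv i w)))

lemma dOp_single (i : Fin n) (S : Finset (Fin n)) (f : MvPolynomial (Fin n) k) :
    dOp i (Finsupp.single S f) =
      if i ∈ S then koszulSign S i • Finsupp.single (S.erase i) (X i * f) else 0 := by
  rw [dOp, Finsupp.lsum_single]
  split_ifs with h <;>
    simp [LinearMap.smul_apply, LinearMap.comp_apply, LinearMap.mulLeft_apply]

lemma eOp_single (d : ℕ) (w : MvPolynomial (Fin n) k) (i : Fin n) (S : Finset (Fin n))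
    (f : MvPolynomial (Fin n) k) :
    eOp d w i (Finsupp.single S f) =
      if i ∈ S then 0
      else koszulSign S i • Finsupp.single (insert i S) (C ((d : k)⁻¹) * pderiv i w * f) := by
  rw [eOp, Finsupp.lsum_single]
  split_ifs with h <;>
    simp [LinearMap.smul_apply, LinearMap.comp_apply, LinearMap.mulLeft_apply, mul_assoc]

/-- The full odd operator `δ = d_Koszul + (γ ∧ −)` restricted to the variable `i`. -/
noncomputable def cOp (d : ℕ) (w : MvPolynomial (Fin n) k) (i : Fin n) :
    KoszulMod k n →ₗ[MvPolynomial (Fin n) k] KoszulMod k n :=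
  dOp i + eOp d w i

lemma cOp_single (d : ℕ) (w : MvPolynomial (Fin n) k) (i : Fin n) (S : Finset (Fin n))
    (f : MvPolynomial (Fin n) k) :
    cOp d w i (Finsupp.single S f) =
      if i ∈ S then koszulSign S i • Finsupp.single (S.erase i) (X i * f)
      else koszulSign S i •
        Finsupp.single (insert i S) (C ((d : k)⁻¹) * pderiv i w * f) := by
  rw [cOp, LinearMap.add_apply, dOp_single, eOp_single]
  by_cases h : i ∈ S <;> simp [h]

variable (d : ℕ) (w : MvPolynomial (Fin n) k)

lemma cOp_cOp_self (i : Fin n) (S : Finset (Fin n)) (f : MvPolynomial (Fin n) k) :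
    cOp d w i (cOp d w i (Finsupp.single S f)) =
      Finsupp.single S (X i * (C ((d : k)⁻¹) * pderiv i w) * f) := by
  rw [cOp_single]
  by_cases hi : i ∈ S
  · rw [if_pos hi, map_zsmul, cOp_single, if_neg (Finset.notMem_erase i S),
      sign_erase_self, Finset.insert_erase hi, smul_smul, sign_mul_self, one_smul]
    congr 1
    ring
  · rw [if_neg hi, map_zsmul, cOp_single, if_pos (Finset.mem_insert_self i S),
      sign_insert_self, Finset.erase_insert hi, smul_smul, sign_mul_self, one_smul]
    congr 1
    ring

lemma anticomm_in_in {i j : Fin n} (hij : i ≠ j) {S : Finset (Fin n)}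
    (hi : i ∈ S) (hj : j ∈ S) (f : MvPolynomial (Fin n) k) :
    cOp d w i (cOp d w j (Finsupp.single S f))
      + cOp d w j (cOp d w i (Finsupp.single S f)) = 0 := by
  have e2 : cOp d w i (cOp d w j (Finsupp.single S f))
      = (koszulSign S j * ((if j < i then -1 else 1) * koszulSign S i)) •
        Finsupp.single ((S.erase j).erase i) (X i * (X j * f)) := by
    rw [cOp_single, if_pos hj, map_zsmul, cOp_single,
      if_pos (Finset.mem_erase.mpr ⟨hij, hi⟩), sign_erase_of_mem hj, smul_smul]
  have e3 : cOp d w j (cOp d w i (Finsupp.single S f))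
      = (koszulSign S i * ((if i < j then -1 else 1) * koszulSign S j)) •
        Finsupp.single ((S.erase j).erase i) (X i * (X j * f)) := by
    rw [cOp_single, if_pos hi, map_zsmul, cOp_single,
      if_pos (Finset.mem_erase.mpr ⟨hij.symm, hj⟩), sign_erase_of_mem hi, smul_smul,
      Finset.erase_right_comm]
    congr 2
    ring
  rw [e2, e3, ← add_smul]
  convert zero_smul ℤ _
  linear_combination (koszulSign S j * koszulSign S i) * eps_cancel hij

lemma anticomm_out_out {i j : Fin n} (hij : i ≠ j) {S : Finset (Fin n)}
    (hi : i ∉ S) (hj : j ∉ S) (f : MvPolynomial (Fin n) k) :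
    cOp d w i (cOp d w j (Finsupp.single S f))
      + cOp d w j (cOp d w i (Finsupp.single S f)) = 0 := by
  have e2 : cOp d w i (cOp d w j (Finsupp.single S f))
      = (koszulSign S j * ((if j < i then -1 else 1) * koszulSign S i)) •
        Finsupp.single (insert i (insert j S))
          ((C ((d : k)⁻¹) * pderiv i w) * ((C ((d : k)⁻¹) * pderiv j w) * f)) := by
    rw [cOp_single, if_neg hj, map_zsmul, cOp_single,
      if_neg (by simp [hij, hi]), sign_insert_of_not_mem hj, smul_smul]
  have e3 : cOp d w j (cOp d w i (Finsupp.single S f))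
      = (koszulSign S i * ((if i < j then -1 else 1) * koszulSign S j)) •
        Finsupp.single (insert i (insert j S))
          ((C ((d : k)⁻¹) * pderiv i w) * ((C ((d : k)⁻¹) * pderiv j w) * f)) := by
    rw [cOp_single, if_neg hi, map_zsmul, cOp_single,
      if_neg (by simp [hij.symm, hj]), sign_insert_of_not_mem hi, smul_smul,
      Finset.insert_comm]
    congr 2
    ring
  rw [e2, e3, ← add_smul]
  convert zero_smul ℤ _
  linear_combination (koszulSign S j * koszulSign S i) * eps_cancel hij

lemma anticomm_in_out {i j : Fin n} (hij : i ≠ j) {S : Finset (Fin n)}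
    (hi : i ∈ S) (hj : j ∉ S) (f : MvPolynomial (Fin n) k) :
    cOp d w i (cOp d w j (Finsupp.single S f))
      + cOp d w j (cOp d w i (Finsupp.single S f)) = 0 := by
  have e2 : cOp d w i (cOp d w j (Finsupp.single S f))
      = (koszulSign S j * ((if j < i then -1 else 1) * koszulSign S i)) •
        Finsupp.single (insert j (S.erase i))
          ((C ((d : k)⁻¹) * pderiv j w) * (X i * f)) := by
    rw [cOp_single, if_neg hj, map_zsmul, cOp_single,
      if_pos (by simp [hi]), sign_insert_of_not_mem hj, smul_smul,
      Finset.erase_insert_of_ne hij.symm]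
    congr 2
    ring
  have e3 : cOp d w j (cOp d w i (Finsupp.single S f))
      = (koszulSign S i * ((if i < j then -1 else 1) * koszulSign S j)) •
        Finsupp.single (insert j (S.erase i))
          ((C ((d : k)⁻¹) * pderiv j w) * (X i * f)) := by
    rw [cOp_single, if_pos hi, map_zsmul, cOp_single,
      if_neg (by simp [hj]), sign_erase_of_mem hi, smul_smul]
  rw [e2, e3, ← add_smul]
  convert zero_smul ℤ _
  linear_combination (koszulSign S j * koszulSign S i) * eps_cancel hij

lemma cOp_anticomm {i j : Fin n} (hij : i ≠ j) (S : Finset (Fin n))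
    (f : MvPolynomial (Fin n) k) :
    cOp d w i (cOp d w j (Finsupp.single S f))
      + cOp d w j (cOp d w i (Finsupp.single S f)) = 0 := by
  by_cases hi : i ∈ S <;> by_cases hj : j ∈ S
  · exact anticomm_in_in d w hij hi hj f
  · exact anticomm_in_out d w hij hi hj f
  · rw [add_comm]; exact anticomm_in_out d w hij.symm hj hi f
  · exact anticomm_out_out d w hij hi hj f

lemma dKoszul_eq (b : KoszulMod k n) : dKoszul b = ∑ i : Fin n, dOp i b := by
  induction b using Finsupp.induction_linear with
  | zero => simp [dKoszul]
  | add f g hf hg =>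
      have hD : dKoszul (f + g) = dKoszul f + dKoszul g := by
        unfold dKoszul
        apply Finsupp.sum_add_index'
        · intro S; simp
        · intro S f1 f2
          simp [mul_add, Finsupp.single_add, smul_add, Finset.sum_add_distrib]
      rw [hD, hf, hg]
      simp [Finset.sum_add_distrib]
  | single S f =>
      rw [dKoszul, Finsupp.sum_single_index (by simp)]
      simp_rw [dOp_single]
      rw [Finset.sum_ite_mem, Finset.univ_inter]

lemma gammaWedge_eq (b : KoszulMod k n) :
    gammaWedge d w b = ∑ i : Fin n, eOp d w i b := by
  induction b using Finsupp.induction_linear with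
  | zero => simp [gammaWedge]
  | add f g hf hg =>
      have hG : gammaWedge d w (f + g) = gammaWedge d w f + gammaWedge d w g := by
        unfold gammaWedge
        apply Finsupp.sum_add_index'
        · intro S; simp
        · intro S f1 f2
          rw [← Finset.sum_add_distrib]
          apply Finset.sum_congr rfl
          intro i _
          by_cases h : i ∈ S <;> simp [h, mul_add, Finsupp.single_add, smul_add]
      rw [hG, hf, hg]
      simp [Finset.sum_add_distrib]
  | single S f =>
      rw [gammaWedge, Finsupp.sum_single_index (by simp)]
      simp_rw [eOp_single]

lemma delta_eq (b : KoszulMod k n) :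
    dKoszul b + gammaWedge d w b = (∑ i : Fin n, cOp d w i) b := by
  rw [dKoszul_eq, gammaWedge_eq, LinearMap.sum_apply, ← Finset.sum_add_distrib]
  apply Finset.sum_congr rfl
  intro i _
  rfl

end KoszulProof

open KoszulProof in
/-- **The Koszul factorization squares to `w`.**  Over a field of characteristic `0`,
for `w` homogeneous of degree `d ≥ 1`, the odd operator
`δ = d_Koszul + (γ ∧ −)` on `Λ•(M) ⊗ Sym(M)` satisfies `δ∘δ = w·id`. -/
theorem stmt_3 {k : Type*} [Field k] [CharZero k] {n d : ℕ} (hd : 1 ≤ d)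
    (w : MvPolynomial (Fin n) k) (hw : w.IsHomogeneous d) :
    ∀ b : KoszulMod k n,
      (fun c => dKoszul c + gammaWedge d w c)
        ((fun c => dKoszul c + gammaWedge d w c) b) = w • b := by
  intro b
  show dKoszul (dKoszul b + gammaWedge d w b)
      + gammaWedge d w (dKoszul b + gammaWedge d w b) = w • b
  rw [delta_eq, delta_eq]
  set L : KoszulMod k n →ₗ[MvPolynomial (Fin n) k] KoszulMod k n :=
    ∑ i : Fin n, cOp d w i with hL
  induction b using Finsupp.induction_linear with
  | zero => simp
  | add f g hf hg => rw [map_add, map_add, smul_add, hf, hg]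
  | single S f =>
      have expand : L (L (Finsupp.single S f))
          = ∑ i : Fin n, ∑ j : Fin n, cOp d w i (cOp d w j (Finsupp.single S f)) := by
        simp only [hL, LinearMap.sum_apply, map_sum]
        exact Finset.sum_comm
      rw [expand, ← Finset.sum_product',
        ← Finset.diag_union_offDiag (Finset.univ : Finset (Fin n)),
        Finset.sum_union (Finset.disjoint_diag_offDiag _)]
      have hoff : ∑ p ∈ (Finset.univ : Finset (Fin n)).offDiag,
          cOp d w p.1 (cOp d w p.2 (Finsupp.single S f)) = 0 := by
        apply Finset.sum_involution (fun p _ => (p.2, p.1))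
        · intro p hp
          exact cOp_anticomm d w (Finset.mem_offDiag.mp hp).2.2 S f
        · intro p hp _ hcontra
          exact (Finset.mem_offDiag.mp hp).2.2 (congrArg Prod.fst hcontra).symm
        · intro p hp
          have h := Finset.mem_offDiag.mp hp
          exact Finset.mem_offDiag.mpr ⟨h.2.1, h.1, h.2.2.symm⟩
        · intro p hp
          rfl
      rw [hoff, add_zero, Finset.sum_diag]
      simp_rw [cOp_cOp_self]
      rw [← Finsupp.single_finset_sum]
      have hsum : ∑ i : Fin n, X i * (C ((d : k)⁻¹) * pderiv i w) * f = w * f := by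
        rw [← Finset.sum_mul]
        congr 1
        have h3 : ∑ i : Fin n, X i * (C ((d : k)⁻¹) * pderiv i w)
            = C ((d : k)⁻¹) * ∑ i : Fin n, X i * pderiv i w := by
          rw [Finset.mul_sum]
          apply Finset.sum_congr rfl
          intro i _
          ring
        rw [h3, euler hw, ← mul_assoc, ← C_mul,
          inv_mul_cancel₀ (Nat.cast_ne_zero.mpr (by omega)), C_1, one_mul]
      rw [hsum, Finsupp.smul_single, smul_eq_mul]
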